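/- For every positive integer k, gcd(k, binomial(k+2,2) − 1) = k / gcd(2,k). -/
import Mathlib


/-- For every positive integer `k`, `gcd(k, C(k+2,2) − 1) = k / gcd(2,k)`.  The left-hand
side is the cyclic order `c(SU(3),k)` of the twisted K-homology of `SU(3)`. -/
theorem cyclic_order_SU3 (k : ℕ) (hk : 0 < k) :
    Nat.gcd k ((k + 2).choose 2 - 1) = k / Nat.gcd 2 k := by
  rcases Nat.even_or_odd k with ⟨m, rfl⟩ | ⟨m, rfl⟩
  · have hm : 0 < m := by omega
    have hc : (m + m + 2).choose 2 = (m + 1) * (2 * m + 1) := by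
      rw [Nat.choose_two_right]
      have h : (m + m + 2) * (m + m + 2 - 1) = 2 * ((m + 1) * (2 * m + 1)) := by
        have : m + m + 2 - 1 = 2 * m + 1 := by omega
        rw [this]; ring
      rw [h, Nat.mul_div_cancel_left _ (by norm_num)]
    have h1 : (m + m + 2).choose 2 - 1 = m * (2 * m + 3) := by rw [hc]; ring_nf; omega
    have h2 : Nat.gcd 2 (m + m) = 2 := Nat.gcd_eq_left ⟨m, by ring⟩
    have h3 : m + m = m * 2 := by ring
    rw [h1, h2, h3, Nat.mul_div_cancel _ (by norm_num), Nat.gcd_mul_left,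
      Nat.Coprime.gcd_eq_one (Nat.coprime_two_left.mpr ⟨m + 1, by ring⟩), mul_one]
  · have hc : (2 * m + 1 + 2).choose 2 = (m + 1) * (2 * m + 3) := by
      rw [Nat.choose_two_right]
      have h : (2 * m + 1 + 2) * (2 * m + 1 + 2 - 1) = 2 * ((m + 1) * (2 * m + 3)) := by
        have : 2 * m + 1 + 2 - 1 = 2 * m + 2 := by omega
        rw [this]; ring
      rw [h, Nat.mul_div_cancel_left _ (by norm_num)]
    have h1 : (2 * m + 1 + 2).choose 2 - 1 = (2 * m + 1) * (m + 2) := by rw [hc]; ring_nf; omega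
    have h2 : Nat.gcd 2 (2 * m + 1) = 1 :=
      Nat.Coprime.gcd_eq_one (Nat.coprime_two_left.mpr ⟨m, by ring⟩)
    rw [h1, h2, Nat.div_one, Nat.gcd_eq_left ⟨m + 2, rfl⟩]
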